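/- For any two indices i₁ ≤ i₂ ≤ m+n with co-rank pairs (j₁,k₁) and (j₂,k₂), the sublist of the stable merge C from position i₁ to i₂ equals the stable merge of the sublist of A from j₁ to j₂ with the sublist of B from k₁ to k₂. In particular, disjoint output blocks correspond to disjoint input blocks that may be merged independently. -/

import Mathlib

/-- List indexing into `WithTop α`: out-of-range accesses are `+∞`. -/
def getTop {α : Type*} [LinearOrder α] (A : List α) (j : ℕ) : WithTop α :=
  ((A[j]?).map (fun a => (a : WithTop α))).getD ⊤

/-- The co-rank conditions for a pair `(j,k)` with `j + k = i`. -/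
def IsCoRankL {α : Type*} [LinearOrder α] (A B : List α) (i j k : ℕ) : Prop :=
  j + k = i ∧ j ≤ A.length ∧ k ≤ B.length ∧
  (j = 0 ∨ getTop A (j - 1) ≤ getTop B k) ∧
  (k = 0 ∨ getTop B (k - 1) < getTop A j)

section Aux

variable {α : Type*} [LinearOrder α]

lemma getTop_cons_succ (a : α) (A : List α) (n : ℕ) :
    getTop (a :: A) (n + 1) = getTop A n := by
  simp [getTop]

lemma getTop_eq_of_lt (A : List α) {j : ℕ} (h : j < A.length) :
    getTop A j = (A[j] : WithTop α) := by
  simp [getTop, List.getElem?_eq_getElem h]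

lemma getTop_eq_top (A : List α) {j : ℕ} (h : A.length ≤ j) :
    getTop A j = ⊤ := by
  simp [getTop, List.getElem?_eq_none h]

lemma getTop_mono {A : List α} (hA : A.Pairwise (· ≤ ·)) {m n : ℕ} (h : m ≤ n) :
    getTop A m ≤ getTop A n := by
  by_cases hn : n < A.length
  · have hm : m < A.length := lt_of_le_of_lt h hn
    rw [getTop_eq_of_lt A hm, getTop_eq_of_lt A hn]
    rcases lt_or_eq_of_le h with h' | h'
    · exact_mod_cast (List.pairwise_iff_getElem.mp hA) m n hm hn h'
    · subst h'; rfl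
  · rw [getTop_eq_top A (le_of_not_gt hn)]
    exact le_top

lemma merge_nil' (s : α → α → Bool) (l : List α) : l.merge [] s = l := by
  cases l <;> simp [List.merge]

lemma getTop_drop (A : List α) (n m : ℕ) :
    getTop (A.drop n) m = getTop A (n + m) := by
  simp [getTop, List.getElem?_drop]

lemma corank_mono {A B : List α} (hA : A.Pairwise (· ≤ ·)) (hB : B.Pairwise (· ≤ ·))
    {i₁ i₂ j₁ k₁ j₂ k₂ : ℕ} (h12 : i₁ ≤ i₂)
    (h₁ : IsCoRankL A B i₁ j₁ k₁) (h₂ : IsCoRankL A B i₂ j₂ k₂) :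
    j₁ ≤ j₂ ∧ k₁ ≤ k₂ := by
  obtain ⟨hs₁, hjA₁, hkB₁, hc₁, hd₁⟩ := h₁
  obtain ⟨hs₂, hjA₂, hkB₂, hc₂, hd₂⟩ := h₂
  constructor
  · by_contra hj
    push_neg at hj
    -- j₂ < j₁, hence k₁ < k₂
    have hk : k₁ < k₂ := by omega
    have hk2 : k₂ ≠ 0 := by omega
    have hj1 : j₁ ≠ 0 := by omega
    have H1 : getTop B (k₂ - 1) < getTop A j₂ := hd₂.resolve_left hk2
    have H2 : getTop A (j₁ - 1) ≤ getTop B k₁ := hc₁.resolve_left hj1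
    have H3 : getTop A j₂ ≤ getTop A (j₁ - 1) := getTop_mono hA (by omega)
    have H4 : getTop B k₁ ≤ getTop B (k₂ - 1) := getTop_mono hB (by omega)
    exact absurd (H1.trans_le (H3.trans (H2.trans H4))) (lt_irrefl _)
  · by_contra hk
    push_neg at hk
    have hj : j₁ < j₂ := by omega
    have hj2 : j₂ ≠ 0 := by omega
    have hk1 : k₁ ≠ 0 := by omega
    have H1 : getTop A (j₂ - 1) ≤ getTop B k₂ := hc₂.resolve_left hj2
    have H2 : getTop B (k₁ - 1) < getTop A j₁ := hd₁.resolve_left hk1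
    have H3 : getTop A j₁ ≤ getTop A (j₂ - 1) := getTop_mono hA (by omega)
    have H4 : getTop B k₂ ≤ getTop B (k₁ - 1) := getTop_mono hB (by omega)
    exact absurd (H2.trans_le (H3.trans (H1.trans H4))) (lt_irrefl _)

/-- The key splitting lemma: a stable merge splits at any co-rank pair. -/
lemma merge_split {A B : List α} (hA : A.Pairwise (· ≤ ·)) (hB : B.Pairwise (· ≤ ·))
    {i j k : ℕ} (h : IsCoRankL A B i j k) :
    A.merge B (· ≤ ·) =
      ((A.take j).merge (B.take k) (· ≤ ·)) ++ ((A.drop j).merge (B.drop k) (· ≤ ·)) := by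
  induction i generalizing A B j k with
  | zero =>
    obtain ⟨hs, -⟩ := h
    obtain ⟨rfl, rfl⟩ : j = 0 ∧ k = 0 := by omega
    simp
  | succ n ih =>
    obtain ⟨hs, hjA, hkB, hc, hd⟩ := h
    rcases Nat.eq_zero_or_pos j with hj0 | hjpos
    · subst hj0
      -- k = n + 1 > 0
      have hk0 : k ≠ 0 := by omega
      have hBk : getTop B (k - 1) < getTop A 0 := hd.resolve_left hk0
      obtain ⟨b, B', rfl⟩ : ∃ b B', B = b :: B' := by
        cases B with
        | nil => simp at hkB; omega
        | cons b B' => exact ⟨b, B', rfl⟩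
      cases A with
      | nil => simp [List.merge]
      | cons a A' =>
        have hba : b < a := by
          have h1 : getTop (b :: B') 0 ≤ getTop (b :: B') (k - 1) :=
            getTop_mono hB (Nat.zero_le _)
          have h2 : getTop (b :: B') 0 < getTop (a :: A') 0 := lt_of_le_of_lt h1 hBk
          rw [getTop_eq_of_lt _ (by simp), getTop_eq_of_lt _ (by simp)] at h2
          exact_mod_cast h2
        have hcond : ¬ (a ≤ b) := not_le.mpr hba
        have hrec : IsCoRankL (a :: A') B' n 0 (k - 1) := by
          refine ⟨by omega, Nat.zero_le _, by simp at hkB; omega, Or.inl rfl, ?_⟩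
          rcases Nat.eq_zero_or_pos (k - 1) with h' | h'
          · exact Or.inl h'
          · refine Or.inr ?_
            have : getTop B' (k - 1 - 1) = getTop (b :: B') (k - 1) := by
              rw [← getTop_cons_succ b B']; congr 1; omega
            rw [this]; exact hBk
        have hB' : B'.Pairwise (· ≤ ·) := hB.of_cons
        have := ih hA hB' hrec
        have hkk : k = (k - 1) + 1 := by omega
        rw [hkk, List.take_succ_cons, List.drop_succ_cons]
        rw [List.cons_merge_cons]
        simp only [decide_eq_true_eq, if_neg hcond]
        rw [this]
        simp
    · -- j > 0, so A nonempty
      obtain ⟨a, A', rfl⟩ : ∃ a A', A = a :: A' := by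
        cases A with
        | nil => simp at hjA; omega
        | cons a A' => exact ⟨a, A', rfl⟩
      have hA' : A'.Pairwise (· ≤ ·) := hA.of_cons
      rcases Nat.eq_zero_or_pos k with hk0 | hkpos
      · subst hk0
        have hAj : getTop (a :: A') (j - 1) ≤ getTop B 0 := hc.resolve_left (by omega)
        cases B with
        | nil => simp [List.merge]
        | cons b B' =>
          have hab : a ≤ b := by
            have h1 : getTop (a :: A') 0 ≤ getTop (a :: A') (j - 1) :=
              getTop_mono hA (Nat.zero_le _)
            have h2 : getTop (a :: A') 0 ≤ getTop (b :: B') 0 := le_trans h1 hAj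
            rw [getTop_eq_of_lt _ (by simp), getTop_eq_of_lt _ (by simp)] at h2
            exact_mod_cast h2
          have hrec : IsCoRankL A' (b :: B') n (j - 1) 0 := by
            refine ⟨by omega, by simp at hjA; omega, Nat.zero_le _, ?_, Or.inl rfl⟩
            rcases Nat.eq_zero_or_pos (j - 1) with h' | h'
            · exact Or.inl h'
            · refine Or.inr ?_
              have : getTop A' (j - 1 - 1) = getTop (a :: A') (j - 1) := by
                rw [← getTop_cons_succ a A']; congr 1; omega
              rw [this]; exact hAj
          have := ih hA' hB hrec
          have hjj : j = (j - 1) + 1 := by omega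
          rw [hjj, List.take_succ_cons, List.drop_succ_cons]
          rw [List.cons_merge_cons]
          simp only [decide_eq_true_eq, if_pos hab]
          rw [this]
          simp [merge_nil']
      · -- j > 0 and k > 0, so B nonempty too
        obtain ⟨b, B', rfl⟩ : ∃ b B', B = b :: B' := by
          cases B with
          | nil => simp at hkB; omega
          | cons b B' => exact ⟨b, B', rfl⟩
        have hB' : B'.Pairwise (· ≤ ·) := hB.of_cons
        have hAj : getTop (a :: A') (j - 1) ≤ getTop (b :: B') k := hc.resolve_left (by omega)
        have hBk : getTop (b :: B') (k - 1) < getTop (a :: A') j := hd.resolve_left (by omega)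
        by_cases hab : a ≤ b
        · have hrec : IsCoRankL A' (b :: B') n (j - 1) k := by
            refine ⟨by omega, by simp at hjA; omega, hkB, ?_, ?_⟩
            · rcases Nat.eq_zero_or_pos (j - 1) with h' | h'
              · exact Or.inl h'
              · refine Or.inr ?_
                have : getTop A' (j - 1 - 1) = getTop (a :: A') (j - 1) := by
                  rw [← getTop_cons_succ a A']; congr 1; omega
                rw [this]; exact hAj
            · refine Or.inr ?_
              have : getTop A' (j - 1) = getTop (a :: A') j := by
                rw [← getTop_cons_succ a A']; congr 1; omega
              rw [this]; exact hBk
          have := ih hA' hB hrec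
          have ht : List.take k (b :: B') = b :: List.take (k - 1) B' := by
            obtain ⟨k', rfl⟩ : ∃ k', k = k' + 1 := ⟨k - 1, by omega⟩
            simp
          rw [ht] at this
          have hjj : j = (j - 1) + 1 := by omega
          rw [hjj, List.take_succ_cons, List.drop_succ_cons, ht]
          simp only [List.cons_merge_cons, decide_eq_true_eq, if_pos hab]
          rw [this]
          simp
        · have hrec : IsCoRankL (a :: A') B' n j (k - 1) := by
            refine ⟨by omega, hjA, by simp at hkB; omega, ?_, ?_⟩
            · refine Or.inr ?_
              have : getTop B' (k - 1) = getTop (b :: B') k := by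
                rw [← getTop_cons_succ b B']; congr 1; omega
              rw [this]; exact hAj
            · rcases Nat.eq_zero_or_pos (k - 1) with h' | h'
              · exact Or.inl h'
              · refine Or.inr ?_
                have : getTop B' (k - 1 - 1) = getTop (b :: B') (k - 1) := by
                  rw [← getTop_cons_succ b B']; congr 1; omega
                rw [this]; exact hBk
          have := ih hA hB' hrec
          have ht : List.take j (a :: A') = a :: List.take (j - 1) A' := by
            obtain ⟨j', rfl⟩ : ∃ j', j = j' + 1 := ⟨j - 1, by omega⟩
            simp
          rw [ht] at this
          have hkk : k = (k - 1) + 1 := by omega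
          rw [hkk, List.take_succ_cons, List.drop_succ_cons, ht]
          simp only [List.cons_merge_cons, decide_eq_true_eq, if_neg hab]
          rw [this]
          simp

end Aux

theorem merge_block_corank {α : Type*} [LinearOrder α]
    (A B : List α) (hA : A.Pairwise (· ≤ ·)) (hB : B.Pairwise (· ≤ ·))
    (i₁ i₂ j₁ k₁ j₂ k₂ : ℕ) (h12 : i₁ ≤ i₂) (hi₂ : i₂ ≤ A.length + B.length)
    (h₁ : IsCoRankL A B i₁ j₁ k₁) (h₂ : IsCoRankL A B i₂ j₂ k₂) :
    ((A.merge B (· ≤ ·)).drop i₁).take (i₂ - i₁) =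
      (((A.drop j₁).take (j₂ - j₁)).merge ((B.drop k₁).take (k₂ - k₁)) (· ≤ ·)) := by
  obtain ⟨hjle, hkle⟩ := corank_mono hA hB h12 h₁ h₂
  obtain ⟨hs₁, hjA₁, hkB₁, hc₁, hd₁⟩ := h₁
  obtain ⟨hs₂, hjA₂, hkB₂, hc₂, hd₂⟩ := h₂
  -- Step 1: split at (j₁, k₁)
  have split1 := merge_split hA hB ⟨hs₁, hjA₁, hkB₁, hc₁, hd₁⟩
  have hlen1 : ((A.take j₁).merge (B.take k₁) (· ≤ ·)).length = i₁ := by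
    rw [List.length_merge]
    rw [List.length_take, List.length_take]
    omega
  have hdrop : (A.merge B (· ≤ ·)).drop i₁ = (A.drop j₁).merge (B.drop k₁) (· ≤ ·) := by
    rw [split1, List.drop_append_of_le_length (by omega), ← hlen1]
    simp
  rw [hdrop]
  -- Step 2: split the suffix merge at (j₂ - j₁, k₂ - k₁)
  have hA' : (A.drop j₁).Pairwise (· ≤ ·) := hA.drop
  have hB' : (B.drop k₁).Pairwise (· ≤ ·) := hB.drop
  have hrec : IsCoRankL (A.drop j₁) (B.drop k₁) (i₂ - i₁) (j₂ - j₁) (k₂ - k₁) := by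
    refine ⟨by omega, by rw [List.length_drop]; omega, by rw [List.length_drop]; omega, ?_, ?_⟩
    · rcases Nat.eq_zero_or_pos (j₂ - j₁) with h' | h'
      · exact Or.inl h'
      · refine Or.inr ?_
        rw [getTop_drop, getTop_drop]
        have e1 : j₁ + (j₂ - j₁ - 1) = j₂ - 1 := by omega
        have e2 : k₁ + (k₂ - k₁) = k₂ := by omega
        rw [e1, e2]
        exact hc₂.resolve_left (by omega)
    · rcases Nat.eq_zero_or_pos (k₂ - k₁) with h' | h'
      · exact Or.inl h'
      · refine Or.inr ?_
        rw [getTop_drop, getTop_drop]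
        have e1 : k₁ + (k₂ - k₁ - 1) = k₂ - 1 := by omega
        have e2 : j₁ + (j₂ - j₁) = j₂ := by omega
        rw [e1, e2]
        exact hd₂.resolve_left (by omega)
  have split2 := merge_split hA' hB' hrec
  have hlen2 : (((A.drop j₁).take (j₂ - j₁)).merge ((B.drop k₁).take (k₂ - k₁)) (· ≤ ·)).length
      = i₂ - i₁ := by
    rw [List.length_merge, List.length_take, List.length_take, List.length_drop,
      List.length_drop]
    omega
  rw [split2, List.take_append_of_le_length (by omega), ← hlen2]
  simp
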